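/- Let $p \in (0,1/2)$, $\eta \in (p, 1/2]$, and let $B$ be an $(\eta, V_i^*)$-biased finite set with $|B| \ge \max\{\frac{80 \log n}{\eta^2(1-2p)^2}, \frac{5 \log n}{(\eta - p)^2}\}$. Under the semi-random oracle model (each query independently corrupted with probability $p$, corrupted answers adversarial), for any fixed point $v$: if $v \in V_i^*$ then $\Pr[\sum_{u \in B} \mathcal{O}(u,v) < |B|/2] \le n^{-10}$, and if $v \notin V_i^*$ then $\Pr[\sum_{u \in B} \mathcal{O}(u,v) \ge |B|/2] \le n^{-10}$. -/

import Mathlib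

open Finset MeasureTheory
open scoped ENNReal

/-- Bernoulli measure on `Bool`: `true` (corrupted) with probability `q`. -/
noncomputable def bern (q : ℝ) : Measure Bool :=
  ENNReal.ofReal q • Measure.dirac true + ENNReal.ofReal (1 - q) • Measure.dirac false

lemma bern_singleton (q : ℝ) (b : Bool) :
    bern q {b} = ENNReal.ofReal (if b then q else 1 - q) := by
  cases b <;> simp [bern, Measure.dirac_apply]

instance bern_finite (q : ℝ) : IsFiniteMeasure (bern q) := by
  constructor
  simp [bern, Measure.dirac_apply]

lemma bern_prob (q : ℝ) (h0 : 0 ≤ q) (h1 : q ≤ 1) : IsProbabilityMeasure (bern q) := by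
  constructor
  simp [bern, Measure.dirac_apply]
  rw [← ENNReal.ofReal_add h0 (by linarith)]
  norm_num

lemma pi_bern_apply {N : ℕ} (q : ℝ) (h0 : 0 ≤ q) (h1 : q ≤ 1) (A : Finset (Fin N → Bool)) :
    Measure.pi (fun _ : Fin N => bern q) ↑A
      = ENNReal.ofReal (∑ ω ∈ A, ∏ u, (if ω u then q else 1 - q)) := by
  classical
  have hw : ∀ b : Bool, 0 ≤ (if b then q else 1 - q) := by
    intro b; cases b <;> simp [h0, h1, sub_nonneg]
  have hsingle : ∀ ω : Fin N → Bool,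
      Measure.pi (fun _ : Fin N => bern q) {ω}
        = ENNReal.ofReal (∏ u, (if ω u then q else 1 - q)) := by
    intro ω
    have h1 : ({ω} : Set (Fin N → Bool)) = Set.pi Set.univ (fun u => {ω u}) := by
      ext g; simp [Set.mem_pi, funext_iff]
    rw [h1, Measure.pi_pi]
    simp only [bern_singleton]
    rw [← ENNReal.ofReal_prod_of_nonneg]
    intro u _; exact hw _
  have hA : (↑A : Set (Fin N → Bool)) = ⋃ ω ∈ A, ({ω} : Set (Fin N → Bool)) := by
    ext g; simp
  rw [hA, measure_biUnion_finset ?_ ?_]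
  · simp only [hsingle]
    rw [← ENNReal.ofReal_sum_of_nonneg]
    intro ω _; exact Finset.prod_nonneg fun u _ => hw _
  · intro x _ y _ hxy
    simp [Set.disjoint_singleton, hxy]
  · intro ω _; exact measurableSet_singleton ω

lemma hoeffding_bernoulli (p : ℝ) (hp0 : 0 < p) (hp1 : p < 1) (s : ℝ) (hs : 0 ≤ s) :
    1 - p + p * Real.exp s ≤ Real.exp (p * s + s ^ 2 / 8) := by
  have hD : ∀ x : ℝ, 0 < 1 - p + p * Real.exp x := by
    intro x
    nlinarith [Real.exp_pos x, mul_pos hp0 (Real.exp_pos x)]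
  set G : ℝ → ℝ := fun x => p + x / 4 - p * Real.exp x / (1 - p + p * Real.exp x) with hGdef
  have hGderiv : ∀ x : ℝ, HasDerivAt G
      (1 / 4 - (p * Real.exp x * (1 - p + p * Real.exp x) - p * Real.exp x * (p * Real.exp x))
        / (1 - p + p * Real.exp x) ^ 2) x := by
    intro x
    have hq : HasDerivAt (fun y : ℝ => p * Real.exp y) (p * Real.exp x) x :=
      (Real.hasDerivAt_exp x).const_mul p
    have hDd : HasDerivAt (fun y : ℝ => 1 - p + p * Real.exp y) (p * Real.exp x) x :=
      hq.const_add (1 - p)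
    have hfrac := hq.div hDd (ne_of_gt (hD x))
    have hlin : HasDerivAt (fun y : ℝ => p + y / 4) (1 / 4) x := by
      simpa using ((hasDerivAt_id x).div_const 4).const_add p
    exact hlin.sub hfrac
  have hGmono : Monotone G := by
    apply monotone_of_deriv_nonneg
    · intro x; exact (hGderiv x).differentiableAt
    · intro x
      rw [(hGderiv x).deriv]
      have h1 := hD x
      have h2 := Real.exp_pos x
      have hsq : 0 ≤ ((1 - p + p * Real.exp x) - 2 * (p * Real.exp x)) ^ 2 := sq_nonneg _
      rw [sub_nonneg, div_le_iff₀ (by positivity)]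
      nlinarith
  have hG0 : G 0 = 0 := by
    simp only [hGdef, Real.exp_zero, mul_one]
    have : 1 - p + p = 1 := by ring
    rw [this]
    field_simp
    ring
  have hGnonneg : ∀ x : ℝ, 0 ≤ x → 0 ≤ G x := by
    intro x hx; rw [← hG0]; exact hGmono hx
  set F : ℝ → ℝ := fun x => p * x + x ^ 2 / 8 - Real.log (1 - p + p * Real.exp x) with hFdef
  have hFderiv : ∀ x : ℝ, HasDerivAt F (G x) x := by
    intro x
    have hq : HasDerivAt (fun y : ℝ => p * Real.exp y) (p * Real.exp x) x :=
      (Real.hasDerivAt_exp x).const_mul p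
    have hDd : HasDerivAt (fun y : ℝ => 1 - p + p * Real.exp y) (p * Real.exp x) x :=
      hq.const_add (1 - p)
    have hlog := hDd.log (ne_of_gt (hD x))
    have hpoly : HasDerivAt (fun y : ℝ => p * y + y ^ 2 / 8) (p + x * 2 / 8) x := by
      have h1 : HasDerivAt (fun y : ℝ => p * y) p x := by
        simpa using (hasDerivAt_id x).const_mul p
      have h2 : HasDerivAt (fun y : ℝ => y ^ 2) (2 * x) x := by
        simpa using hasDerivAt_pow 2 x
      exact (h1.add (h2.div_const 8)).congr_deriv (by ring)
    have := hpoly.sub hlog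
    refine this.congr_deriv ?_
    simp only [hGdef]
    ring
  have hFmono : MonotoneOn F (Set.Ici 0) := by
    apply monotoneOn_of_deriv_nonneg (convex_Ici 0)
    · exact fun x _ => (hFderiv x).continuousAt.continuousWithinAt
    · intro x _; exact (hFderiv x).differentiableAt.differentiableWithinAt
    · intro x hx
      rw [(hFderiv x).deriv]
      exact hGnonneg x (le_of_lt (by simpa using hx))
  have hF0 : F 0 = 0 := by
    simp [hFdef, Real.exp_zero]
  have hFs : 0 ≤ F s := by
    rw [← hF0]
    exact hFmono Set.self_mem_Ici hs hs
  rw [hFdef] at hFs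
  simp only [sub_nonneg] at hFs
  calc 1 - p + p * Real.exp s = Real.exp (Real.log (1 - p + p * Real.exp s)) :=
        (Real.exp_log (hD s)).symm
    _ ≤ Real.exp (p * s + s ^ 2 / 8) := Real.exp_le_exp.2 hFs
lemma tail_bound {N : ℕ} (p η : ℝ) (hp0 : 0 < p) (hp2 : p < 1/2) (hpη : p < η)
    (hη2 : η ≤ 1/2) (B : Finset (Fin N)) :
    ∑ ω ∈ Finset.univ.filter
        (fun ω : Fin N → Bool => η * B.card ≤ ((B.filter fun u => ω u = true).card : ℝ)),
      ∏ u, (if ω u then p else 1 - p)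
    ≤ Real.exp (-2 * (η - p)^2 * B.card) := by
  classical
  set t : ℝ := 4 * (η - p) with ht
  have ht0 : 0 < t := by simp [ht]; linarith
  set m : ℕ := B.card with hm
  set cnt : (Fin N → Bool) → ℝ := fun ω => ((B.filter fun u => ω u = true).card : ℝ) with hcnt
  have hw : ∀ b : Bool, 0 ≤ (if b then p else 1 - p) := by
    intro b; cases b <;> simp <;> linarith
  -- step A: bound each term by exp-weighted term, extend sum to univ
  have stepA : ∑ ω ∈ Finset.univ.filter (fun ω : Fin N → Bool => η * m ≤ cnt ω),
      ∏ u, (if ω u then p else 1 - p)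
      ≤ Real.exp (-(t * η * m)) * ∑ ω : Fin N → Bool,
          Real.exp (t * cnt ω) * ∏ u, (if ω u then p else 1 - p) := by
    rw [Finset.mul_sum]
    refine le_trans (Finset.sum_le_sum ?_) (Finset.sum_le_sum_of_subset_of_nonneg
      (Finset.filter_subset _ _) ?_)
    · intro ω hω
      rw [Finset.mem_filter] at hω
      have h1 : (1:ℝ) ≤ Real.exp (-(t * η * m)) * Real.exp (t * cnt ω) := by
        rw [← Real.exp_add]
        rw [← Real.exp_zero]
        apply Real.exp_le_exp.2
        nlinarith [hω.2, ht0]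
      calc ∏ u, (if ω u then p else 1 - p)
          = 1 * ∏ u, (if ω u then p else 1 - p) := by ring
        _ ≤ (Real.exp (-(t * η * m)) * Real.exp (t * cnt ω)) * ∏ u, (if ω u then p else 1 - p) := by
            apply mul_le_mul_of_nonneg_right h1 (Finset.prod_nonneg fun u _ => hw (ω u))
        _ = Real.exp (-(t * η * m)) * (Real.exp (t * cnt ω) * ∏ u, (if ω u then p else 1 - p)) := by
            ring
    · intro ω _ _
      exact mul_nonneg (Real.exp_nonneg _) (mul_nonneg (Real.exp_nonneg _) (Finset.prod_nonneg fun u _ => hw (ω u)))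
  set g : Fin N → Bool → ℝ := fun u b =>
    (if u ∈ B then Real.exp (t * (if b then 1 else 0)) else 1) * (if b then p else 1 - p)
    with hg
  have stepB : ∀ ω : Fin N → Bool,
      Real.exp (t * cnt ω) * ∏ u, (if ω u then p else 1 - p) = ∏ u, g u (ω u) := by
    intro ω
    have hc : cnt ω = ∑ u ∈ B, (if ω u = true then (1:ℝ) else 0) := by
      simp only [hcnt]
      rw [Finset.card_filter]
      push_cast
      rfl
    have he : Real.exp (t * cnt ω) = ∏ u ∈ B, Real.exp (t * (if ω u then 1 else 0)) := by
      rw [hc, Finset.mul_sum, Real.exp_sum]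
    have he2 : ∏ u ∈ B, Real.exp (t * (if ω u then 1 else 0))
        = ∏ u : Fin N, (if u ∈ B then Real.exp (t * (if ω u then 1 else 0)) else 1) := by
      rw [Finset.prod_ite_mem, Finset.univ_inter]
    rw [he, he2, ← Finset.prod_mul_distrib]
  have stepC : ∑ ω : Fin N → Bool, Real.exp (t * cnt ω) * ∏ u, (if ω u then p else 1 - p)
      = (p * Real.exp t + (1 - p)) ^ m := by
    simp only [stepB]
    have := (Finset.prod_univ_sum (fun _ : Fin N => (Finset.univ : Finset Bool)) g).symm
    rw [Fintype.piFinset_univ] at this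
    rw [this]
    have hrow : ∀ u : Fin N, (∑ b : Bool, g u b)
        = if u ∈ B then p * Real.exp t + (1 - p) else 1 := by
      intro u
      rw [Fintype.sum_bool]
      by_cases hu : u ∈ B <;> simp [hg, hu, Real.exp_zero] <;> ring
    calc ∏ u : Fin N, (∑ b : Bool, g u b)
        = ∏ u : Fin N, (if u ∈ B then p * Real.exp t + (1 - p) else 1) := by
          exact Finset.prod_congr rfl fun u _ => hrow u
      _ = ∏ u ∈ B, (p * Real.exp t + (1 - p)) := by
          rw [Finset.prod_ite_mem, Finset.univ_inter]
      _ = (p * Real.exp t + (1 - p)) ^ m := by rw [Finset.prod_const, hm]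
  -- step E: scalar bound via Hoeffding's lemma
  have hmgf : p * Real.exp t + (1 - p) ≤ Real.exp (p * t + t ^ 2 / 8) := by
    have := hoeffding_bernoulli p hp0 (by linarith) t (le_of_lt ht0)
    linarith
  have hmgf0 : 0 ≤ p * Real.exp t + (1 - p) := by
    have := Real.exp_nonneg t; nlinarith
  have hpow : (p * Real.exp t + (1 - p)) ^ m ≤ Real.exp (p * t + t ^ 2 / 8) ^ m :=
    pow_le_pow_left₀ hmgf0 hmgf m
  calc ∑ ω ∈ Finset.univ.filter (fun ω : Fin N → Bool => η * m ≤ cnt ω),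
        ∏ u, (if ω u then p else 1 - p)
      ≤ Real.exp (-(t * η * m)) * ∑ ω : Fin N → Bool,
          Real.exp (t * cnt ω) * ∏ u, (if ω u then p else 1 - p) := stepA
    _ = Real.exp (-(t * η * m)) * (p * Real.exp t + (1 - p)) ^ m := by rw [stepC]
    _ ≤ Real.exp (-(t * η * m)) * Real.exp (p * t + t ^ 2 / 8) ^ m := by
        exact mul_le_mul_of_nonneg_left hpow (Real.exp_nonneg _)
    _ = Real.exp (-(t * η * m) + m * (p * t + t ^ 2 / 8)) := by
        rw [← Real.exp_nat_mul, ← Real.exp_add]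
    _ ≤ Real.exp (-2 * (η - p)^2 * B.card) := by
        apply Real.exp_le_exp.2
        have hm0 : (0:ℝ) ≤ (m:ℝ) := Nat.cast_nonneg m
        have key : p * t + t ^ 2 / 8 - t * η = -2 * (η - p)^2 := by
          rw [ht]; ring
        have := mul_le_mul_of_nonneg_left (le_of_eq key) hm0
        rw [hm]
        nlinarith [this]

theorem stmt7 (n N : ℕ) (p η : ℝ) (hp : 0 < p ∧ p < 1/2) (hη : p < η ∧ η ≤ 1/2)
    (c : Fin N → ℕ) (i : ℕ) (B : Finset (Fin N)) (v : Fin N)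
    (hbias : (1/2 + η) * (B.card : ℝ)
      ≤ ((B.filter (fun u => c u = i)).card : ℝ))
    (hB : max (80 * Real.log n / (η^2 * (1 - 2*p)^2))
              (5 * Real.log n / (η - p)^2) ≤ (B.card : ℝ))
    (O : (Fin N → Bool) → Fin N → ℕ)
    (hO01 : ∀ ω u, O ω u ≤ 1)
    (hOtrue : ∀ ω u, ω u = false → O ω u = if c u = c v then 1 else 0)
    (μ : Measure (Fin N → Bool))
    (hμ : μ = Measure.pi (fun _ => bern p)) :
    (c v = i →
      μ {ω | (∑ u ∈ B, (O ω u : ℝ)) < (B.card : ℝ)/2} ≤ ((n : ℝ≥0∞))⁻¹ ^ 10)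
    ∧ (c v ≠ i →
      μ {ω | (B.card : ℝ)/2 ≤ ∑ u ∈ B, (O ω u : ℝ)} ≤ ((n : ℝ≥0∞))⁻¹ ^ 10) := by
  classical
  obtain ⟨hp0, hp2⟩ := hp
  obtain ⟨hpη, hη2⟩ := hη
  have hη0 : 0 < η := lt_trans hp0 hpη
  -- the key uniform bound
  have key : ∀ A : Set (Fin N → Bool),
      (∀ ω ∈ A, η * (B.card : ℝ) ≤ ((B.filter fun u => ω u = true).card : ℝ)) →
      μ A ≤ ((n : ℝ≥0∞))⁻¹ ^ 10 := by
    intro A hA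
    rcases Nat.lt_or_ge n 2 with hn | hn
    · -- n = 0 or n = 1 : trivial bound
      interval_cases n
      · refine le_top.trans_eq ?_
        simp [ENNReal.top_pow]
      · haveI : IsProbabilityMeasure μ := by
          rw [hμ]
          haveI : ∀ j : Fin N, IsProbabilityMeasure (bern p) :=
            fun _ => bern_prob p (le_of_lt hp0) (by linarith)
          infer_instance
        simpa using prob_le_one
    · -- n ≥ 2
      have hn1 : (1:ℝ) < (n:ℝ) := by exact_mod_cast hn
      have hnpos : (0:ℝ) < (n:ℝ) := by linarith
      have hL : 0 < Real.log n := Real.log_pos hn1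
      set A' : Finset (Fin N → Bool) := Finset.univ.filter
        (fun ω : Fin N → Bool => η * B.card ≤ ((B.filter fun u => ω u = true).card : ℝ)) with hA'
      have hsub : A ⊆ ↑A' := by
        intro ω hω
        simp only [hA', Finset.coe_filter, Set.mem_setOf_eq, Finset.mem_univ, true_and]
        exact hA ω hω
      have ht2 : (0:ℝ) < (η - p)^2 := pow_pos (sub_pos.2 hpη) 2
      have hm5 : 5 * Real.log n / (η - p)^2 ≤ (B.card : ℝ) := le_trans (le_max_right _ _) hB
      have hexp : Real.exp (-2 * (η - p)^2 * B.card) ≤ ((n:ℝ)⁻¹) ^ 10 := by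
        have h5 : 5 * Real.log n ≤ (η - p)^2 * B.card := by
          rw [div_le_iff₀ ht2] at hm5
          linarith
        have : Real.exp (-2 * (η - p)^2 * B.card) ≤ Real.exp (-(10 * Real.log n)) := by
          apply Real.exp_le_exp.2
          nlinarith
        refine le_trans this (le_of_eq ?_)
        rw [Real.exp_neg]
        have h10 : (10 : ℝ) * Real.log n = (10 : ℕ) * Real.log n := by norm_num
        rw [h10, Real.exp_nat_mul, Real.exp_log hnpos, ← inv_pow]
      calc μ A ≤ μ ↑A' := measure_mono hsub
        _ = ENNReal.ofReal (∑ ω ∈ A', ∏ u, (if ω u then p else 1 - p)) := by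
            rw [hμ]; exact pi_bern_apply p (le_of_lt hp0) (by linarith) A'
        _ ≤ ENNReal.ofReal (Real.exp (-2 * (η - p)^2 * B.card)) := by
            apply ENNReal.ofReal_le_ofReal
            exact tail_bound p η hp0 hp2 hpη hη2 B
        _ ≤ ENNReal.ofReal (((n:ℝ)⁻¹) ^ 10) := ENNReal.ofReal_le_ofReal hexp
        _ = ((n : ℝ≥0∞))⁻¹ ^ 10 := by
            rw [ENNReal.ofReal_pow (by positivity), ENNReal.ofReal_inv_of_pos hnpos,
              ENNReal.ofReal_natCast]
  constructor
  · -- case c v = i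
    intro hvi
    apply key
    intro ω hω
    simp only [Set.mem_setOf_eq] at hω
    set Sg : Finset (Fin N) := B.filter (fun u => c u = i ∧ ω u = false) with hSg
    have h1 : ∀ u ∈ Sg, (O ω u : ℝ) = 1 := by
      intro u hu
      rw [hSg, Finset.mem_filter] at hu
      rw [hOtrue ω u hu.2.2, hvi, hu.2.1]
      simp
    have hcard1 : (Sg.card : ℝ) ≤ ∑ u ∈ B, (O ω u : ℝ) := by
      have : (Sg.card : ℝ) = ∑ u ∈ Sg, (O ω u : ℝ) := by
        rw [Finset.sum_congr rfl h1, Finset.sum_const, nsmul_eq_mul, mul_one]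
      rw [this]
      apply Finset.sum_le_sum_of_subset_of_nonneg (Finset.filter_subset _ _)
      intro u _ _; positivity
    have hcard2 : ((B.filter (fun u => c u = i)).card : ℝ)
        ≤ (Sg.card : ℝ) + ((B.filter fun u => ω u = true).card : ℝ) := by
      have hsub2 : B.filter (fun u => c u = i) ⊆ Sg ∪ (B.filter fun u => ω u = true) := by
        intro u hu
        rw [Finset.mem_filter] at hu
        rw [Finset.mem_union, hSg, Finset.mem_filter, Finset.mem_filter]
        cases hωu : ω u
        · exact Or.inl ⟨hu.1, hu.2, rfl⟩
        · exact Or.inr ⟨hu.1, rfl⟩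
      calc ((B.filter (fun u => c u = i)).card : ℝ)
          ≤ ((Sg ∪ (B.filter fun u => ω u = true)).card : ℝ) := by
            exact_mod_cast Finset.card_le_card hsub2
        _ ≤ (Sg.card : ℝ) + ((B.filter fun u => ω u = true).card : ℝ) := by
            exact_mod_cast Finset.card_union_le _ _
    linarith
  · -- case c v ≠ i
    intro hvi
    apply key
    intro ω hω
    simp only [Set.mem_setOf_eq] at hω
    have hpt : ∀ u ∈ B, (O ω u : ℝ)
        ≤ (if ω u = true then 1 else 0) + (if ¬ (c u = i) then 1 else 0) := by
      intro u _
      have hO1 : (O ω u : ℝ) ≤ 1 := by exact_mod_cast hO01 ω u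
      cases hωu : ω u
      · by_cases hci : c u = i
        · have : O ω u = 0 := by
            rw [hOtrue ω u hωu]
            simp only [ite_eq_right_iff]
            intro hcc
            exact absurd (hci ▸ hcc.symm) hvi
          simp [hωu, hci, this]
        · simp only [hωu, Bool.false_eq_true, if_false, hci, not_false_iff, if_true]
          linarith
      · have : (0:ℝ) ≤ (if ¬ (c u = i) then (1:ℝ) else 0) := by positivity
        simp only [hωu, if_true]
        linarith
    have hsum : ∑ u ∈ B, (O ω u : ℝ)
        ≤ ((B.filter fun u => ω u = true).card : ℝ)
          + ((B.filter fun u => ¬ (c u = i)).card : ℝ) := by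
      calc ∑ u ∈ B, (O ω u : ℝ)
          ≤ ∑ u ∈ B, ((if ω u = true then (1:ℝ) else 0) + (if ¬ (c u = i) then (1:ℝ) else 0)) :=
            Finset.sum_le_sum hpt
        _ = (∑ u ∈ B, (if ω u = true then (1:ℝ) else 0))
            + ∑ u ∈ B, (if ¬ (c u = i) then (1:ℝ) else 0) := Finset.sum_add_distrib
        _ = ((B.filter fun u => ω u = true).card : ℝ)
            + ((B.filter fun u => ¬ (c u = i)).card : ℝ) := by
            rw [Finset.sum_boole, Finset.sum_boole]
    have hcompl : ((B.filter fun u => ¬ (c u = i)).card : ℝ)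
        = (B.card : ℝ) - ((B.filter (fun u => c u = i)).card : ℝ) := by
      have h0 := Finset.card_filter_add_card_filter_not (s := B)
        (p := fun u => c u = i)
      have h' : ((B.filter (fun u => c u = i)).card : ℝ)
          + ((B.filter fun u => ¬ (c u = i)).card : ℝ) = (B.card : ℝ) := by
        exact_mod_cast h0
      linarith
    linarith
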